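/- Let s and L be positive integers such that 8 divides s and 8L ≥ 17s. Then there exists an (L,s,0) PPRIC code with exactly 6 codewords. -/
import Mathlib


/-- The Hamming ball of radius `ρ` centered at `x` in `𝔽₂^L`. -/
def pball (L : ℕ) (x : Fin L → ZMod 2) (ρ : ℕ) : Set (Fin L → ZMod 2) :=
  {y | hammingDist x y ≤ ρ}

/-- `C` is an `(L,s,r)` PPRIC code: a set of words of Hamming weight exactly `s`
such that `B(0,r) = ⋂_{c ∈ C} B(c, r+s)`. -/
def IsPPRIC (L s r : ℕ) (C : Set (Fin L → ZMod 2)) : Prop :=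
  (∀ c ∈ C, hammingNorm c = s) ∧
  pball L 0 r = ⋂ c ∈ C, pball L c (r + s)

namespace PPRIC14

/-- Weights used in the counting argument. -/
def Wt : Fin 6 → ℕ := ![5, 4, 3, 2, 2, 1]

/-- For each of the six codewords, the set of blocks (among 17 blocks) in its support. -/
def Bs : Fin 6 → Finset ℕ :=
  ![{1, 2, 3, 4, 13, 14, 15, 16}, {5, 6, 7, 8, 9, 10, 11, 12},
    {0, 5, 6, 7, 13, 14, 15, 16}, {0, 1, 2, 8, 9, 10, 11, 12},
    {0, 3, 4, 8, 9, 10, 11, 12}, {0, 1, 2, 3, 4, 5, 6, 7}]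

lemma bs_sub : ∀ i : Fin 6, Bs i ⊆ Finset.range 17 := by decide

lemma bs_lt {i : Fin 6} {b : ℕ} (hb : b ∈ Bs i) : b < 17 :=
  Finset.mem_range.mp (bs_sub i hb)

lemma bs_card (i : Fin 6) : (Bs i).card = 8 := by
  fin_cases i <;> rfl

lemma bs_inj : Function.Injective Bs := by decide

lemma key8 (b : ℕ) : (∑ i : Fin 6, if b ∈ Bs i then Wt i else 0) ≤ 8 := by
  by_cases hb : b < 17
  · interval_cases b <;> decide
  · have h : ∀ i : Fin 6, b ∉ Bs i := fun i h => hb (bs_lt h)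
    simp [h]

lemma sumWt : (∑ i : Fin 6, Wt i) = 17 := by decide

lemma zmod2_cases (x : ZMod 2) : x = 0 ∨ x = 1 := by
  fin_cases x
  · exact Or.inl rfl
  · exact Or.inr rfl

lemma blk_lt {t L b : ℕ} (ht : 0 < t) (hL : 17 * t ≤ L) (hb : b < 17) : b * t < L := by
  nlinarith

/-- Counting coordinates whose block lies in `S`. -/
lemma count_div {L t : ℕ} (ht : 0 < t) (hL : 17 * t ≤ L) (S : Finset ℕ)
    (hS : ∀ b ∈ S, b < 17) :
    (Finset.univ.filter (fun j : Fin L => (j : ℕ) / t ∈ S)).card = S.card * t := by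
  classical
  have hcard : (S ×ˢ Finset.range t).card = S.card * t := by
    simp [Finset.card_product]
  rw [← hcard]
  refine Finset.card_bij' (fun j _ => ((j : ℕ) / t, (j : ℕ) % t))
    (fun p hp => (⟨p.1 * t + p.2, ?_⟩ : Fin L)) ?_ ?_ ?_ ?_
  · rcases p with ⟨b, r⟩
    simp only [Finset.mem_product, Finset.mem_range] at hp
    have hb : b < 17 := hS b hp.1
    show b * t + r < L
    have h2 : b * t + t ≤ 17 * t := by
      have h3 : (b + 1) * t ≤ 17 * t := Nat.mul_le_mul_right t (by omega)
      rw [add_mul, one_mul] at h3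
      exact h3
    omega
  · intro j hj
    simp only [Finset.mem_filter, Finset.mem_univ, true_and] at hj
    simp only [Finset.mem_product, Finset.mem_range]
    exact ⟨hj, Nat.mod_lt _ ht⟩
  · intro p hp
    rcases p with ⟨b, r⟩
    simp only [Finset.mem_product, Finset.mem_range] at hp
    simp only [Finset.mem_filter, Finset.mem_univ, true_and]
    have h1 : (b * t + r) / t = b := by
      rw [mul_comm, Nat.mul_add_div ht, Nat.div_eq_of_lt hp.2, add_zero]
    rw [h1]
    exact hp.1
  · intro j hj
    apply Fin.ext
    simp only
    rw [add_comm, Nat.mod_add_div']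
  · intro p hp
    rcases p with ⟨b, r⟩
    simp only [Finset.mem_product, Finset.mem_range] at hp
    have h1 : (b * t + r) / t = b := by
      rw [mul_comm, Nat.mul_add_div ht, Nat.div_eq_of_lt hp.2, add_zero]
    have h2 : (b * t + r) % t = r := by
      rw [mul_comm, Nat.mul_add_mod, Nat.mod_eq_of_lt hp.2]
    simp [h1, h2]

end PPRIC14

open PPRIC14 in
theorem stmt14 (L s : ℕ) (hs : 0 < s) (hL0 : 0 < L)
    (hdvd : 8 ∣ s) (hratio : 17 * s ≤ 8 * L) :
    ∃ C : Finset (Fin L → ZMod 2), IsPPRIC L s 0 ↑C ∧ C.card = 6 := by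
  classical
  obtain ⟨t, rfl⟩ := hdvd
  have ht : 0 < t := by omega
  have hL : 17 * t ≤ L := by omega
  -- the codewords
  set cw : Fin 6 → Fin L → ZMod 2 :=
    fun i j => if (j : ℕ) / t ∈ Bs i then 1 else 0 with hcw
  -- Hamming norm of each codeword
  have hnorm : ∀ i : Fin 6, hammingNorm (cw i) = 8 * t := by
    intro i
    have h1 : hammingNorm (cw i) =
        (Finset.univ.filter (fun j : Fin L => (j : ℕ) / t ∈ Bs i)).card := by
      unfold hammingNorm
      congr 1
      ext j
      by_cases h : (j : ℕ) / t ∈ Bs i <;> simp [hcw, h]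
    rw [h1, count_div ht hL (Bs i) (fun b hb => bs_lt hb), bs_card]
  -- injectivity of the codeword map
  have hinj : Function.Injective cw := by
    intro i i' h
    apply bs_inj
    have key : ∀ b : ℕ, b < 17 → (b ∈ Bs i ↔ b ∈ Bs i') := by
      intro b hb
      have hj : b * t < L := blk_lt ht hL hb
      have hdiv : (b * t) / t = b := Nat.mul_div_cancel b ht
      have hb2 := congrFun h (⟨b * t, hj⟩ : Fin L)
      simp only [hcw] at hb2
      simp only [show ((⟨b * t, hj⟩ : Fin L) : ℕ) = b * t from rfl, hdiv] at hb2
      by_cases h1 : b ∈ Bs i <;> by_cases h2 : b ∈ Bs i' <;>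
        simp [h1, h2] at hb2 ⊢
    ext b
    constructor
    · intro hb; exact (key b (bs_lt hb)).mp hb
    · intro hb; exact (key b (bs_lt hb)).mpr hb
  refine ⟨Finset.image cw Finset.univ, ⟨?_, ?_⟩, ?_⟩
  · -- weights
    intro c hc
    simp only [Finset.coe_image, Finset.coe_univ, Set.image_univ, Set.mem_range] at hc
    obtain ⟨i, rfl⟩ := hc
    exact hnorm i
  · -- the ball intersection
    ext y
    simp only [pball, Set.mem_setOf_eq, Set.mem_iInter]
    constructor
    · intro hy c hc
      have hy0 : y = 0 := by
        have h0 : hammingDist 0 y = 0 := Nat.le_zero.mp hy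
        exact (hammingDist_eq_zero.mp h0).symm
      subst hy0
      simp only [Finset.mem_coe, Finset.mem_image, Finset.mem_univ, true_and] at hc
      obtain ⟨i, rfl⟩ := hc
      show hammingDist (cw i) 0 ≤ 0 + 8 * t
      rw [hammingDist_zero_right, hnorm i]
      omega
    · intro hy
      -- main argument: y within distance 8t of every codeword forces y = 0
      suffices hy0 : y = 0 by
        subst hy0
        simp [hammingDist_self]
      by_contra hne
      -- support of y
      set T : Finset (Fin L) := Finset.univ.filter (fun j => y j ≠ 0) with hT
      have hTne : T.Nonempty := by
        rcases Function.ne_iff.mp hne with ⟨j, hj⟩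
        exact ⟨j, by simp [hT]; exact hj⟩
      set n : Fin 6 → ℕ := fun i => (T.filter (fun j : Fin L => (j : ℕ) / t ∈ Bs i)).card with hn
      -- distance identity ⇒ T.card ≤ 2 * n i for every i
      have hkey : ∀ i : Fin 6, T.card ≤ 2 * n i := by
        intro i
        have hball := hy (cw i) (by
          simp only [Finset.coe_image, Finset.coe_univ, Set.image_univ, Set.mem_range]
          exact ⟨i, rfl⟩)
        simp only [Set.mem_setOf_eq, zero_add] at hball
        -- hball : hammingDist (cw i) y ≤ 8 * t
        set A : Finset (Fin L) :=
          Finset.univ.filter (fun j : Fin L => (j : ℕ) / t ∈ Bs i) with hA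
        have hAcard : A.card = 8 * t := by
          rw [hA, count_div ht hL (Bs i) (fun b hb => bs_lt hb), bs_card]
        have hsplit : (Finset.univ.filter (fun j : Fin L => cw i j ≠ y j)) =
            (A \ T) ∪ (T \ A) := by
          ext j
          simp only [Finset.mem_filter, Finset.mem_univ, true_and, Finset.mem_union,
            Finset.mem_sdiff, hA, hT, Finset.mem_filter, Finset.mem_univ, true_and]
          rcases zmod2_cases (y j) with h0 | h1
          · by_cases hm : (j : ℕ) / t ∈ Bs i <;> simp [hcw, hm, h0]
          · by_cases hm : (j : ℕ) / t ∈ Bs i <;> simp [hcw, hm, h1]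
        have hdisj : Disjoint (A \ T) (T \ A) := by
          apply Finset.disjoint_left.mpr
          intro a ha hb
          simp only [Finset.mem_sdiff] at ha hb
          exact hb.2 ha.1
        have hdist : hammingDist (cw i) y = (A \ T).card + (T \ A).card := by
          unfold hammingDist
          rw [hsplit, Finset.card_union_of_disjoint hdisj]
        have hIA : (A \ T).card + (A ∩ T).card = A.card :=
          Finset.card_sdiff_add_card_inter A T
        have hIT : (T \ A).card + (T ∩ A).card = T.card :=
          Finset.card_sdiff_add_card_inter T A
        have hnT : n i = (A ∩ T).card := by
          have hset : T.filter (fun j : Fin L => (j : ℕ) / t ∈ Bs i) = A ∩ T := by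
            ext j
            simp only [Finset.mem_filter, Finset.mem_inter, hA, Finset.mem_filter,
              Finset.mem_univ, true_and, hT]
            tauto
          show (T.filter (fun j : Fin L => (j : ℕ) / t ∈ Bs i)).card = (A ∩ T).card
          rw [hset]
        have hcomm : (T ∩ A).card = (A ∩ T).card := by rw [Finset.inter_comm]
        omega
      -- weighted counting
      have hswap : (∑ i : Fin 6, Wt i * n i) = ∑ j ∈ T, ∑ i : Fin 6,
          (if (j : ℕ) / t ∈ Bs i then Wt i else 0) := by
        rw [Finset.sum_comm]
        apply Finset.sum_congr rfl
        intro i _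
        rw [hn]
        simp only [Finset.card_filter, Finset.mul_sum, mul_ite, mul_one, mul_zero]
      have hbound : (∑ i : Fin 6, Wt i * n i) ≤ 8 * T.card := by
        rw [hswap]
        calc (∑ j ∈ T, ∑ i : Fin 6, (if (j : ℕ) / t ∈ Bs i then Wt i else 0))
            ≤ ∑ _j ∈ T, 8 := Finset.sum_le_sum (fun j _ => key8 ((j : ℕ) / t))
          _ = 8 * T.card := by rw [Finset.sum_const, smul_eq_mul, mul_comm]
      have hlower : 17 * T.card ≤ ∑ i : Fin 6, Wt i * (2 * n i) := by
        calc 17 * T.card = (∑ i : Fin 6, Wt i) * T.card := by rw [sumWt]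
          _ = ∑ i : Fin 6, Wt i * T.card := by rw [Finset.sum_mul]
          _ ≤ ∑ i : Fin 6, Wt i * (2 * n i) :=
              Finset.sum_le_sum (fun i _ => Nat.mul_le_mul_left _ (hkey i))
      have heq2 : (∑ i : Fin 6, Wt i * (2 * n i)) = 2 * ∑ i : Fin 6, Wt i * n i := by
        rw [Finset.mul_sum]
        apply Finset.sum_congr rfl
        intro i _
        ring
      have hTpos : 0 < T.card := Finset.card_pos.mpr hTne
      omega
  · -- cardinality
    rw [Finset.card_image_of_injective _ hinj, Finset.card_univ, Fintype.card_fin]
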